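/- Let d be a metric on a set containing customers X and facilities. Let A, B be finite sets of facilities and let Γ ⊆ B be a set such that for every μ ∈ A, d(μ, Γ) = d(μ, B) (i.e., Γ contains, for each μ ∈ A, a closest point of B to μ). Then for every customer x, d(x, Γ) ≤ 2·d(x, A) + d(x, B). -/
import Mathlib

/-- Projection lemma: in a metric space, if `Γ ⊆ B` contains for each `μ ∈ A` a
closest point of `B` to `μ` (so that `d(μ, Γ) = d(μ, B)`), then for every point
`x`, `d(x, Γ) ≤ 2 d(x, A) + d(x, B)`. -/
theorem stmt12 {X : Type*} [MetricSpace X] (A B Γ : Finset X)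
    (hA : A.Nonempty) (hΓ : Γ.Nonempty) (hΓB : Γ ⊆ B)
    (hnear : ∀ μ ∈ A, Metric.infDist μ (Γ : Set X) = Metric.infDist μ (B : Set X)) :
    ∀ x : X, Metric.infDist x (Γ : Set X)
      ≤ 2 * Metric.infDist x (A : Set X) + Metric.infDist x (B : Set X) := by
  intro x
  -- pick μ ∈ A achieving the infDist from x
  obtain ⟨μ, hμA, hμd⟩ := A.finite_toSet.isCompact.exists_infDist_eq_dist
    (by exact_mod_cast hA) x
  have h1 : Metric.infDist x (Γ : Set X) ≤ Metric.infDist μ (Γ : Set X) + dist x μ :=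
    Metric.infDist_le_infDist_add_dist
  have h2 : Metric.infDist μ (B : Set X) ≤ Metric.infDist x (B : Set X) + dist μ x :=
    Metric.infDist_le_infDist_add_dist
  have := hnear μ hμA
  rw [dist_comm μ x] at h2
  calc Metric.infDist x (Γ : Set X)
      ≤ 2 * dist x μ + Metric.infDist x (B : Set X) := by
        rw [this] at h1; linarith
    _ = 2 * Metric.infDist x (A : Set X) + Metric.infDist x (B : Set X) := by rw [← hμd]
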